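/- arXiv:1009.2061 — 2 statements merged into one kernel-verified Lean document; each statement's English description precedes it below -/
import Mathlib

section
/- Let A and B be commutative noetherian local algebras over a field k, both with residue field k, and let s : A → B be a local ring homomorphism. Suppose that for every finite-dimensional commutative local k-algebra C, every local k-algebra homomorphism A → C factors as the composition of s with some k-algebra homomorphism B → C (i.e., precomposition with s is surjective from Hom_alg(B,C) to Hom_alg(A,C)). Then s is injective. -/
open IsLocalRing

/-- Auxiliary: for a noetherian local `k`-algebra with residue field `k`,
the quotient by a power of the maximal ideal is finite-dimensional over `k`. -/
lemma aux_finite {k A : Type} [Field k] [CommRing A] [Algebra k A]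
    [IsLocalRing A] [IsNoetherianRing A]
    (hres : Function.Surjective (algebraMap k (IsLocalRing.ResidueField A))) (n : ℕ) :
    Module.Finite k (A ⧸ (maximalIdeal A ^ n)) := by
  set m := maximalIdeal A with hm
  set Q := A ⧸ (m ^ n) with hQ
  -- every element of A is a scalar plus an element of m
  have hdec : ∀ a : A, ∃ c : k, a - algebraMap k A c ∈ m := by
    intro a
    obtain ⟨c, hc⟩ := hres (IsLocalRing.residue A a)
    refine ⟨c, ?_⟩
    have : IsLocalRing.residue A (a - algebraMap k A c) = 0 := by
      rw [map_sub, ← hc]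
      have : IsLocalRing.residue A (algebraMap k A c) = algebraMap k (ResidueField A) c := by
        show Ideal.Quotient.mk (maximalIdeal A) (algebraMap k A c) = _
        exact Ideal.Quotient.mk_algebraMap k (maximalIdeal A) c
      rw [this, sub_self]
    exact Ideal.Quotient.eq_zero_iff_mem.mp this
  -- generators of powers of m
  have hfg : ∀ i : ℕ, ∃ S : Finset A, Ideal.span (↑S : Set A) = m ^ i := by
    intro i
    exact (IsNoetherian.noetherian (m ^ i))
  choose S hS using hfg
  -- key decomposition inside A
  have key : ∀ i : ℕ, ((m ^ i).restrictScalars k : Submodule k A) ≤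
      Submodule.span k (↑(S i) : Set A) ⊔ ((m ^ (i + 1)).restrictScalars k) := by
    intro i a ha
    rw [Submodule.restrictScalars_mem, ← hS i] at ha
    rw [Ideal.span, Submodule.mem_span_finset] at ha
    obtain ⟨f, -, hf⟩ := ha
    choose c hc using fun x => hdec (f x)
    rw [Submodule.mem_sup]
    refine ⟨∑ x ∈ S i, c x • x, ?_, ∑ x ∈ S i, (f x - algebraMap k A (c x)) * x, ?_, ?_⟩
    · exact Submodule.sum_smul_mem _ _ fun x hx => Submodule.subset_span hx
    · rw [Submodule.restrictScalars_mem]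
      refine Ideal.sum_mem _ fun x hx => ?_
      have hxm : x ∈ m ^ i := by
        rw [← hS i]; exact Ideal.subset_span hx
      have := Ideal.mul_mem_mul (hc x) hxm
      rwa [← pow_succ', hm] at this
    · rw [← hf, ← Finset.sum_add_distrib]
      congr 1
      ext x
      rw [Algebra.smul_def, smul_eq_mul, ← add_mul, add_sub_cancel]
  -- the k-linear quotient map
  let π : A →ₐ[k] Q := Ideal.Quotient.mkₐ k (m ^ n)
  let πₗ : A →ₗ[k] Q := π.toLinearMap
  set N : ℕ → Submodule k Q := fun i => Submodule.map πₗ ((m ^ i).restrictScalars k) with hN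
  have hNmono : ∀ i, N (i + 1) ≤ N i := by
    intro i
    exact Submodule.map_mono fun x hx =>
      (Ideal.pow_le_pow_right (by omega) : m ^ (i+1) ≤ m ^ i) hx
  have hNeq : ∀ i, N i = Submodule.span k (πₗ '' ↑(S i)) ⊔ N (i + 1) := by
    intro i
    apply le_antisymm
    · calc N i ≤ Submodule.map πₗ
            (Submodule.span k (↑(S i) : Set A) ⊔ ((m ^ (i + 1)).restrictScalars k)) :=
            Submodule.map_mono (key i)
        _ = _ := by rw [Submodule.map_sup, Submodule.map_span]
    · refine sup_le ?_ (hNmono i)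
      rw [Submodule.span_le]
      rintro _ ⟨x, hx, rfl⟩
      exact ⟨x, show x ∈ m ^ i by rw [← hS i]; exact Ideal.subset_span hx, rfl⟩
  have hNbot : ∀ i, n ≤ i → N i = ⊥ := by
    intro i hi
    rw [eq_bot_iff]
    rintro _ ⟨x, hx, rfl⟩
    have hx' : x ∈ m ^ n := (Ideal.pow_le_pow_right hi) (Submodule.restrictScalars_mem k _ x |>.mp hx)
    exact (Ideal.Quotient.eq_zero_iff_mem.mpr hx' : Ideal.Quotient.mk (m ^ n) x = 0)
  have hfgN : ∀ j : ℕ, ∀ i : ℕ, n ≤ i + j → (N i).FG := by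
    intro j
    induction j with
    | zero => intro i hi; rw [hNbot i (by omega)]; exact Submodule.fg_bot
    | succ j ih =>
      intro i hi
      rw [hNeq i]
      exact Submodule.FG.sup (Submodule.fg_span ((S i).finite_toSet.image _))
        (ih (i + 1) (by omega))
  have htop : (⊤ : Submodule k Q).FG := by
    have h0 : N 0 = ⊤ := by
      rw [hN]
      simp only [pow_zero, Ideal.one_eq_top, Submodule.restrictScalars_top, Submodule.map_top]
      rw [LinearMap.range_eq_top]
      exact Ideal.Quotient.mk_surjective
    rw [← h0]
    exact hfgN n 0 (by omega)
  exact Module.finite_def.mpr htop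

/-- Lemma 5.6 (`lem:s is scheme-theoretically surjective`): if `A, B` are commutative
noetherian local `k`-algebras with residue field `k` and `s : A →ₐ[k] B` is a local
homomorphism such that for every finite-dimensional commutative local `k`-algebra `C`,
every local `k`-algebra homomorphism `A → C` factors through `s`, then `s` is injective. -/
theorem stmt0 {k : Type} [Field k]
    (A B : Type) [CommRing A] [CommRing B]
    [Algebra k A] [Algebra k B]
    [IsLocalRing A] [IsLocalRing B]
    [IsNoetherianRing A] [IsNoetherianRing B]
    (hresA : Function.Bijective (algebraMap k (IsLocalRing.ResidueField A)))
    (hresB : Function.Bijective (algebraMap k (IsLocalRing.ResidueField B)))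
    (s : A →ₐ[k] B) (hs : IsLocalHom (s : A →+* B))
    (hsurj : ∀ (C : Type) [CommRing C] [Algebra k C] [IsLocalRing C],
      FiniteDimensional k C →
      ∀ (f : A →ₐ[k] C), IsLocalHom (f : A →+* C) →
        ∃ g : B →ₐ[k] C, g.comp s = f) :
    Function.Injective s := by
  rw [injective_iff_map_eq_zero]
  intro a ha
  by_contra hne
  -- Krull intersection: find n with a ∉ m^n
  have hKrull : (⨅ n : ℕ, maximalIdeal A ^ n) = ⊥ :=
    Ideal.iInf_pow_eq_bot_of_isLocalRing _ (Ideal.IsMaximal.ne_top inferInstance)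
  have : ¬ a ∈ (⨅ n : ℕ, maximalIdeal A ^ n) := by
    rw [hKrull]; simpa using hne
  rw [Ideal.mem_iInf] at this
  push_neg at this
  obtain ⟨n, hn⟩ := this
  -- set up C = A / m^n
  have hIne : maximalIdeal A ^ n ≠ ⊤ := fun h => hn (h ▸ Submodule.mem_top)
  set Q := A ⧸ (maximalIdeal A ^ n) with hQ
  have : Nontrivial Q := Ideal.Quotient.nontrivial_iff.mpr hIne
  have hsurjQ : Function.Surjective (Ideal.Quotient.mk (maximalIdeal A ^ n)) :=
    Ideal.Quotient.mk_surjective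
  have : IsLocalRing Q := IsLocalRing.of_surjective' _ hsurjQ
  have hfin : Module.Finite k Q := aux_finite hresA.2 n
  let f : A →ₐ[k] Q := Ideal.Quotient.mkₐ k (maximalIdeal A ^ n)
  have hloc : IsLocalHom (f : A →+* Q) :=
    IsLocalHom.of_surjective _ hsurjQ
  obtain ⟨g, hg⟩ := hsurj Q hfin f hloc
  have : f a = 0 := by
    rw [← hg]
    simp [ha]
  exact hn (Ideal.Quotient.eq_zero_iff_mem.mp this)
end

section
/- Let A be a commutative noetherian ring and J an ideal of A admitting a presentation A^m --M--> A^n → J → 0, where M is an n×m matrix acting by left multiplication. Let A' := A[t_1, …, t_{n-1}]/I where I is the ideal generated by the entries of the row vector (t_1, …, t_{n-1}, 1)·M. Let P' be a prime ideal of A' and P := P' ∩ A. If P and J are comaximal (P + J = A), then P·A' = P'. -/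
set_option maxHeartbeats 1000000


open MvPolynomial

/-- Lemma 4.5 (`lem-proj`): let `A` be commutative noetherian, `J` an ideal with a
presentation `A^m --M--> A^{n+1} → J → 0` (generators `g i`), and
`A' := A[t_1,…,t_n]/((t_1,…,t_n,1)·M)`.  If a prime `P'` of `A'` satisfies that
`P := P' ∩ A` is comaximal with `J`, then `P·A' = P'`. -/
theorem stmt1 {A : Type} [CommRing A] [IsNoetherianRing A]
    (n m : ℕ) (M : Matrix (Fin (n + 1)) (Fin m) A)
    (g : Fin (n + 1) → A) (J : Ideal A)
    (hJ : J = Ideal.span (Set.range g))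
    -- exactness of  A^m --M--> A^{n+1} --g--> J → 0 :
    (hexact : ∀ c : Fin (n + 1) → A,
      (∑ i, c i * g i = 0) ↔ ∃ d : Fin m → A, ∀ i, c i = ∑ j, M i j * d j)
    -- the row vector (t_1, …, t_n, 1):
    (v : Fin (n + 1) → MvPolynomial (Fin n) A)
    (hv : v = Fin.snoc (fun i => X i) 1)
    (I : Ideal (MvPolynomial (Fin n) A))
    (hI : I = Ideal.span {p | ∃ j : Fin m, p = ∑ i, v i * C (M i j)})
    (φ : A →+* MvPolynomial (Fin n) A ⧸ I)
    (hφ : φ = (Ideal.Quotient.mk I).comp (C : A →+* MvPolynomial (Fin n) A))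
    (P' : Ideal (MvPolynomial (Fin n) A ⧸ I)) (hP' : P'.IsPrime)
    (P : Ideal A) (hP : P = P'.comap φ)
    (hco : P ⊔ J = ⊤) :
    P.map φ = P' := by
  classical
  set mk : MvPolynomial (Fin n) A →+* MvPolynomial (Fin n) A ⧸ I := Ideal.Quotient.mk I with hmk
  set V : Fin (n + 1) → (MvPolynomial (Fin n) A ⧸ I) := fun i => mk (v i) with hV
  have hφ' : ∀ a : A, φ a = mk (C a) := fun a => by rw [hφ]; rfl
  -- F1 : the relations hold in the quotient
  have F1 : ∀ j : Fin m, (∑ i, V i * φ (M i j)) = 0 := by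
    intro j
    have hmem : (∑ i, v i * C (M i j)) ∈ I := by
      rw [hI]; exact Ideal.subset_span ⟨j, rfl⟩
    have h0 : mk (∑ i, v i * C (M i j)) = 0 := (Ideal.Quotient.eq_zero_iff_mem).2 hmem
    calc (∑ i, V i * φ (M i j)) = mk (∑ i, v i * C (M i j)) := by
          rw [map_sum]; exact Finset.sum_congr rfl fun i _ => by rw [map_mul, hφ']
      _ = 0 := h0
  -- F2 : any A-linear relation among the g's holds with V's
  have F2 : ∀ c : Fin (n + 1) → A, (∑ l, c l * g l = 0) → (∑ l, φ (c l) * V l) = 0 := by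
    intro c hc
    obtain ⟨d, hd⟩ := (hexact c).1 hc
    calc (∑ l, φ (c l) * V l) = ∑ l, ∑ j, φ (d j) * (V l * φ (M l j)) := by
          refine Finset.sum_congr rfl fun l _ => ?_
          rw [hd l, map_sum, Finset.sum_mul]
          exact Finset.sum_congr rfl fun j _ => by rw [map_mul]; ring
      _ = ∑ j, φ (d j) * ∑ l, V l * φ (M l j) := by
          rw [Finset.sum_comm]
          exact Finset.sum_congr rfl fun j _ => by rw [Finset.mul_sum]
      _ = 0 := by simp [F1]
  -- V at the last index is 1
  have hVlast : V (Fin.last n) = 1 := by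
    have : v (Fin.last n) = 1 := by rw [hv]; simp [Fin.snoc_last]
    rw [hV]; simp only [this, map_one]
  set γ : MvPolynomial (Fin n) A ⧸ I := φ (g (Fin.last n)) with hγ
  -- key relation : γ * V k = φ (g k)
  have F3 : ∀ k, γ * V k = φ (g k) := by
    intro k
    set c : Fin (n + 1) → A :=
      fun l => (if l = k then g (Fin.last n) else 0) - (if l = Fin.last n then g k else 0) with hc
    have hsum : ∑ l, c l * g l = 0 := by
      simp only [hc, sub_mul, sub_eq_zero, Finset.sum_sub_distrib, ite_mul, zero_mul,
        Finset.sum_ite_eq', Finset.mem_univ, if_true]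
      ring
    have h0 := F2 c hsum
    have hexp : (∑ l, φ (c l) * V l) = γ * V k - φ (g k) * V (Fin.last n) := by
      simp only [hc, map_sub, sub_mul, Finset.sum_sub_distrib, apply_ite φ, map_zero,
        ite_mul, zero_mul, Finset.sum_ite_eq', Finset.mem_univ, if_true, hγ]
    rw [hexp, hVlast, mul_one, sub_eq_zero] at h0
    exact h0
  -- every element of the quotient, multiplied by a power of γ, lands in φ(A)
  have G : ∀ y : MvPolynomial (Fin n) A ⧸ I, ∃ (k : ℕ) (a : A), γ ^ k * y = φ a := by
    have Gpoly : ∀ q : MvPolynomial (Fin n) A, ∃ (k : ℕ) (a : A), γ ^ k * mk q = φ a := by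
      intro q
      induction q using MvPolynomial.induction_on with
      | C a => exact ⟨0, a, by rw [pow_zero, one_mul, hφ']⟩
      | add q r hq hr =>
          obtain ⟨k1, a1, h1⟩ := hq
          obtain ⟨k2, a2, h2⟩ := hr
          refine ⟨k1 + k2, g (Fin.last n) ^ k2 * a1 + g (Fin.last n) ^ k1 * a2, ?_⟩
          rw [map_add mk q r, map_add φ, map_mul φ, map_mul φ, map_pow φ, map_pow φ,
            ← hγ, ← h1, ← h2]
          ring
      | mul_X q i hq =>
          obtain ⟨k, a, h⟩ := hq
          refine ⟨k + 1, a * g (Fin.castSucc i), ?_⟩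
          have hvX : V (Fin.castSucc i) = mk (X i) := by
            rw [hV]; simp only [hv, Fin.snoc_castSucc]
          have : γ * mk (X i) = φ (g (Fin.castSucc i)) := by rw [← hvX]; exact F3 _
          rw [map_mul, pow_succ, map_mul, ← h, ← this]
          ring
    intro y
    obtain ⟨q, rfl⟩ := Ideal.Quotient.mk_surjective y
    exact Gpoly q
  -- comaximality: get p ∈ P, e ∈ J with p + e = 1
  have h1 : (1 : A) ∈ P ⊔ J := by rw [hco]; trivial
  obtain ⟨p, hp, e, he, hpe⟩ := Submodule.mem_sup.1 h1
  rw [hJ] at he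
  obtain ⟨c, hce⟩ := (Submodule.mem_span_range_iff_exists_fun A).1 he
  set S : MvPolynomial (Fin n) A ⧸ I := ∑ l, φ (c l) * V l with hS
  have hγS : γ * S = φ e := by
    calc γ * S = ∑ l, φ (c l) * (γ * V l) := by rw [hS, Finset.mul_sum]; exact Finset.sum_congr rfl fun l _ => by ring
      _ = ∑ l, φ (c l * g l) := Finset.sum_congr rfl fun l _ => by rw [F3, map_mul]
      _ = φ e := by rw [← map_sum]; exact congrArg φ (by simpa using hce)
  have hK1 : 1 - γ * S ∈ P.map φ := by
    rw [hγS]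
    have : (1 : MvPolynomial (Fin n) A ⧸ I) - φ e = φ p := by
      rw [← map_one φ, ← map_sub]; congr 1; rw [← hpe]; ring
    rw [this]
    exact Ideal.mem_map_of_mem φ hp
  -- conclude
  apply le_antisymm
  · exact Ideal.map_le_iff_le_comap.mpr (le_of_eq hP)
  · intro x hx
    obtain ⟨k, a, hy⟩ := G x
    have hφa : φ a ∈ P' := by
      rw [← hy]; exact Ideal.mul_mem_left P' _ hx
    have haP : a ∈ P := by rw [hP]; exact hφa
    have hK2 : γ ^ k * x ∈ P.map φ := by rw [hy]; exact Ideal.mem_map_of_mem φ haP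
    have hdvd : (1 : MvPolynomial (Fin n) A ⧸ I) - γ * S ∣ 1 - (γ * S) ^ k := by
      simpa using sub_dvd_pow_sub_pow 1 (γ * S) k
    have hK3 : (1 : MvPolynomial (Fin n) A ⧸ I) - (γ * S) ^ k ∈ P.map φ := by
      obtain ⟨z, hz⟩ := hdvd
      rw [hz]
      exact Ideal.mul_mem_right z _ hK1
    have hxeq : x = (1 - (γ * S) ^ k) * x + S ^ k * (γ ^ k * x) := by
      rw [mul_pow]; ring
    rw [hxeq]
    exact Ideal.add_mem _ (Ideal.mul_mem_right x _ hK3) (Ideal.mul_mem_left _ _ hK2)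
end
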